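/- For every integer n ≥ 0 there exists a constant C_n = C(β,n) such that for all z > 0 and all v with v ≢ ±π (mod 2βπ): |∂/∂v ( z^{n−1} · (∂ⁿ/∂zⁿ)(e^z · E(z,v)) )| ≤ C_n. -/

import Mathlib

open Real MeasureTheory Set Filter Topology

/-- The function `E(z,v)` appearing in Carslaw's representation of the conical heat kernel. -/
noncomputable def Efun (β z v : ℝ) : ℝ :=
  ∫ y in Set.Ioi (0 : ℝ),
    Real.exp (-z * Real.cosh y) *
      (2 * Real.sin (π / β) * (Real.cos (π / β) - Real.cos (v / β) * Real.cosh (y / β))) /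
      ((Real.cosh (y / β) - Real.cos ((v - π) / β)) *
        (Real.cosh (y / β) - Real.cos ((v + π) / β)))


namespace EfunAux


variable {β : ℝ}

/-- numerator partial fraction identity -/
lemma trig_id (hβ : β ≠ 0) (w X : ℝ) :
    2 * Real.sin (π / β) * (Real.cos (π / β) - Real.cos (w / β) * X) =
      Real.sin ((w - π) / β) * (X - Real.cos ((w + π) / β)) -
        Real.sin ((w + π) / β) * (X - Real.cos ((w - π) / β)) := by
  have h1 : (w - π) / β = w / β - π / β := by ring
  have h2 : (w + π) / β = w / β + π / β := by ring
  rw [h1, h2, Real.sin_sub, Real.sin_add, Real.cos_sub, Real.cos_add]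
  have hp : Real.sin (w / β) ^ 2 + Real.cos (w / β) ^ 2 = 1 := Real.sin_sq_add_cos_sq _
  have hr : Real.sin (π / β) ^ 2 + Real.cos (π / β) ^ 2 = 1 := Real.sin_sq_add_cos_sq _
  linear_combination (-(2 * Real.sin (π / β) * Real.cos (π / β))) * hp

/-- `t^m ≤ m! * exp t` for `t ≥ 0`. -/
lemma pow_le_factorial_mul_exp {t : ℝ} (ht : 0 ≤ t) (m : ℕ) :
    t ^ m ≤ (m.factorial : ℝ) * Real.exp t := by
  have h1 : t ^ m / (m.factorial : ℝ) ≤ Real.exp t := by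
    have := Real.sum_le_exp_of_nonneg ht (m + 1)
    refine le_trans ?_ this
    have : t ^ m / (m.factorial : ℝ) =
        (fun i => t ^ i / (i.factorial : ℝ)) m := rfl
    rw [this]
    refine Finset.single_le_sum (f := fun i => t ^ i / (i.factorial : ℝ)) ?_ ?_
    · intro i _
      positivity
    · exact Finset.self_mem_range_succ m
  have hm : (0:ℝ) < (m.factorial : ℝ) := by positivity
  calc t ^ m = t ^ m / (m.factorial : ℝ) * (m.factorial : ℝ) := by field_simp
    _ ≤ Real.exp t * (m.factorial : ℝ) := by
        exact mul_le_mul_of_nonneg_right h1 (le_of_lt hm)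
    _ = (m.factorial : ℝ) * Real.exp t := by ring

/-- `s^m * exp (-s) ≤ m!` for `s ≥ 0`. -/
lemma pow_mul_exp_neg_le {s : ℝ} (hs : 0 ≤ s) (m : ℕ) :
    s ^ m * Real.exp (-s) ≤ (m.factorial : ℝ) := by
  have h2 := mul_le_mul_of_nonneg_right (pow_le_factorial_mul_exp hs m)
    (le_of_lt (Real.exp_pos (-s)))
  calc s ^ m * Real.exp (-s) ≤ (m.factorial : ℝ) * Real.exp s * Real.exp (-s) := h2
    _ = (m.factorial : ℝ) := by
        rw [mul_assoc, ← Real.exp_add, add_neg_cancel, Real.exp_zero, mul_one]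

lemma cosh_le_exp_self {y : ℝ} (hy : 0 ≤ y) : Real.cosh y ≤ Real.exp y := by
  rw [Real.cosh_eq]
  have : Real.exp (-y) ≤ Real.exp y := Real.exp_le_exp.mpr (by linarith)
  linarith

lemma exp_le_two_cosh (y : ℝ) : Real.exp y ≤ 2 * Real.cosh y := by
  rw [Real.cosh_eq]
  have := (Real.exp (-y)).exp_pos
  have : 0 < Real.exp (-y) := Real.exp_pos _
  linarith



noncomputable def gg (β w y : ℝ) : ℝ :=
  Real.sin ((w - π) / β) / (Real.cosh (y / β) - Real.cos ((w - π) / β)) -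
    Real.sin ((w + π) / β) / (Real.cosh (y / β) - Real.cos ((w + π) / β))

noncomputable def gg' (β w y : ℝ) : ℝ :=
  (Real.cos ((w - π) / β) * Real.cosh (y / β) - 1) /
      (Real.cosh (y / β) - Real.cos ((w - π) / β)) ^ 2 * (1 / β) -
    (Real.cos ((w + π) / β) * Real.cosh (y / β) - 1) /
      (Real.cosh (y / β) - Real.cos ((w + π) / β)) ^ 2 * (1 / β)

def Good (β w : ℝ) : Prop := Real.cos ((w - π) / β) < 1 ∧ Real.cos ((w + π) / β) < 1

lemma den_pos {c : ℝ} (hc : c < 1) (t : ℝ) : 0 < Real.cosh t - c := by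
  have := Real.one_le_cosh t; linarith

lemma den_ge {c : ℝ} (hc : c ≤ 1) (t : ℝ) : Real.cosh t - 1 ≤ Real.cosh t - c := by linarith

/-- the single-term derivative bound `|cX-1| ≤ 2(X-c)` for `-1 ≤ c ≤ 1 ≤ X`. -/
lemma num_le {c X : ℝ} (hc1 : -1 ≤ c) (hc2 : c ≤ 1) (hX : 1 ≤ X) :
    |c * X - 1| ≤ 2 * (X - c) := by
  rw [abs_le]
  constructor <;> nlinarith

/-- `|gg' β w y| ≤ (2/β) * (1/P + 1/Q)`. -/
lemma gg'_bound {β w : ℝ} (hβ0 : 0 < β) (hw : Good β w) (y : ℝ) :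
    |gg' β w y| ≤ 2 / β * (1 / (Real.cosh (y / β) - Real.cos ((w - π) / β)) +
      1 / (Real.cosh (y / β) - Real.cos ((w + π) / β))) := by
  obtain ⟨h1, h2⟩ := hw
  have hP := den_pos h1 (y / β)
  have hQ := den_pos h2 (y / β)
  set X := Real.cosh (y / β)
  set c1 := Real.cos ((w - π) / β)
  set c2 := Real.cos ((w + π) / β)
  have hX : 1 ≤ X := Real.one_le_cosh _
  have e1 : |(c1 * X - 1) / (X - c1) ^ 2 * (1 / β)| ≤ 2 / β * (1 / (X - c1)) := by
    rw [abs_mul, abs_div]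
    have h1' := num_le (Real.neg_one_le_cos _) (le_of_lt h1) hX
    have : |(X - c1) ^ 2| = (X - c1) * (X - c1) := by
      rw [abs_of_nonneg (by positivity)]; ring
    rw [this, abs_of_nonneg (by positivity : (0:ℝ) ≤ 1 / β)]
    rw [div_mul_eq_mul_div, div_le_iff₀ (by positivity)]
    calc |c1 * X - 1| * (1 / β) ≤ 2 * (X - c1) * (1 / β) :=
          mul_le_mul_of_nonneg_right h1' (by positivity)
      _ = 2 / β * (1 / (X - c1)) * ((X - c1) * (X - c1)) := by field_simp
  have e2 : |(c2 * X - 1) / (X - c2) ^ 2 * (1 / β)| ≤ 2 / β * (1 / (X - c2)) := by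
    rw [abs_mul, abs_div]
    have h2' := num_le (Real.neg_one_le_cos _) (le_of_lt h2) hX
    have : |(X - c2) ^ 2| = (X - c2) * (X - c2) := by
      rw [abs_of_nonneg (by positivity)]; ring
    rw [this, abs_of_nonneg (by positivity : (0:ℝ) ≤ 1 / β)]
    rw [div_mul_eq_mul_div, div_le_iff₀ (by positivity)]
    calc |c2 * X - 1| * (1 / β) ≤ 2 * (X - c2) * (1 / β) :=
          mul_le_mul_of_nonneg_right h2' (by positivity)
      _ = 2 / β * (1 / (X - c2)) * ((X - c2) * (X - c2)) := by field_simp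
  calc |gg' β w y| ≤ |(c1 * X - 1) / (X - c1) ^ 2 * (1 / β)| +
        |(c2 * X - 1) / (X - c2) ^ 2 * (1 / β)| := abs_sub _ _
    _ ≤ 2 / β * (1 / (X - c1)) + 2 / β * (1 / (X - c2)) := add_le_add e1 e2
    _ = 2 / β * (1 / (X - c1) + 1 / (X - c2)) := by ring



lemma exp_ge_four {t : ℝ} (ht : 2 ≤ t) : (4:ℝ) ≤ Real.exp t := by
  have h1 : (2:ℝ) ≤ Real.exp 1 := by have := Real.add_one_le_exp 1; linarith
  have h2 : Real.exp 2 ≤ Real.exp t := Real.exp_le_exp.mpr ht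
  have : (4:ℝ) ≤ Real.exp 2 := by
    have : Real.exp 2 = Real.exp 1 * Real.exp 1 := by
      rw [← Real.exp_add]; norm_num
    nlinarith
  linarith

lemma cosh_le_cosh_div {β y : ℝ} (hβ0 : 0 < β) (hβ1 : β < 1) (hy : 0 ≤ y) :
    Real.cosh y ≤ Real.cosh (y / β) := by
  rw [Real.cosh_le_cosh, abs_of_nonneg hy, abs_of_nonneg (by positivity), le_div_iff₀ hβ0]
  nlinarith

lemma den_exp_lower {β y : ℝ} (hβ0 : 0 < β) (hβ1 : β < 1) (hy : 2 ≤ y) :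
    Real.exp (y / β) / 4 ≤ Real.cosh (y / β) - 1 := by
  have ht : 2 ≤ y / β := by
    rw [le_div_iff₀ hβ0]; nlinarith
  have h4 : (4:ℝ) ≤ Real.exp (y / β) := exp_ge_four ht
  have := exp_le_two_cosh (y / β)
  linarith

/-- `(cosh y - 1) / (cosh (y/β) - c) ≤ 4 e^{2a} e^{-ay}` with `a = 1/β - 1`. -/
lemma keyA {β c y : ℝ} (hβ0 : 0 < β) (hβ1 : β < 1) (hc : c < 1) (hy : 0 ≤ y) :
    (Real.cosh y - 1) * (1 / (Real.cosh (y / β) - c)) ≤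
      4 * Real.exp (2 * (1 / β - 1)) * Real.exp (-((1 / β - 1) * y)) := by
  have ha : 0 < 1 / β - 1 := by
    have : 1 < 1 / β := (one_lt_div hβ0).mpr hβ1
    linarith
  have hP := den_pos hc (y / β)
  have hXy := cosh_le_cosh_div hβ0 hβ1 hy
  have hu : 0 ≤ Real.cosh y - 1 := by have := Real.one_le_cosh y; linarith
  have hre : 4 * Real.exp (2 * (1 / β - 1)) * Real.exp (-((1 / β - 1) * y)) =
      4 * Real.exp ((1 / β - 1) * (2 - y)) := by
    rw [mul_assoc, ← Real.exp_add]; ring_nf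
  rw [hre]
  rcases le_total y 2 with h2 | h2
  · have hle1 : (Real.cosh y - 1) * (1 / (Real.cosh (y / β) - c)) ≤ 1 := by
      rw [mul_one_div, div_le_one hP]
      have := Real.one_le_cosh (y / β)
      linarith
    have : (1:ℝ) ≤ Real.exp ((1 / β - 1) * (2 - y)) :=
      Real.one_le_exp (by nlinarith)
    linarith
  · have hlow := den_exp_lower hβ0 hβ1 h2
    have hP4 : Real.exp (y / β) / 4 ≤ Real.cosh (y / β) - c := by linarith
    have hcy : Real.cosh y - 1 ≤ Real.exp y := by
      have := cosh_le_exp_self (by linarith : (0:ℝ) ≤ y); linarith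
    have hinv : 1 / (Real.cosh (y / β) - c) ≤ 4 * Real.exp (-(y / β)) := by
      rw [div_le_iff₀ hP]
      have h0 : 0 < Real.exp (y / β) / 4 := by positivity
      calc (1:ℝ) = Real.exp (-(y/β)) * Real.exp (y/β) := by
            rw [← Real.exp_add]; simp
        _ = 4 * Real.exp (-(y / β)) * (Real.exp (y / β) / 4) := by ring
        _ ≤ 4 * Real.exp (-(y / β)) * (Real.cosh (y / β) - c) := by
            apply mul_le_mul_of_nonneg_left hP4 (by positivity)
    calc (Real.cosh y - 1) * (1 / (Real.cosh (y / β) - c)) ≤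
          Real.exp y * (4 * Real.exp (-(y / β))) := by
          apply mul_le_mul hcy hinv (by positivity) (by positivity)
      _ = 4 * Real.exp ((1 - 1/β) * y) := by rw [mul_comm, mul_assoc, ← Real.exp_add]; ring_nf
      _ ≤ 4 * Real.exp ((1 / β - 1) * (2 - y)) := by
          have : (1 - 1/β) * y ≤ (1 / β - 1) * (2 - y) := by nlinarith
          have := Real.exp_le_exp.mpr this
          linarith

/-- `1 / (cosh (y/β) - c) ≤ 4 e^{2a} (1 + 1/(1-c)) e^{-ay}`. -/
lemma keyB {β c y : ℝ} (hβ0 : 0 < β) (hβ1 : β < 1) (hc : c < 1) (hy : 0 ≤ y) :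
    1 / (Real.cosh (y / β) - c) ≤
      4 * Real.exp (2 * (1 / β - 1)) * (1 + 1 / (1 - c)) * Real.exp (-((1 / β - 1) * y)) := by
  have ha : 0 < 1 / β - 1 := by
    have : 1 < 1 / β := (one_lt_div hβ0).mpr hβ1
    linarith
  have hP := den_pos hc (y / β)
  have h1c : 0 < 1 - c := by linarith
  have hre : 4 * Real.exp (2 * (1 / β - 1)) * (1 + 1 / (1 - c)) * Real.exp (-((1 / β - 1) * y)) =
      4 * (1 + 1 / (1 - c)) * Real.exp ((1 / β - 1) * (2 - y)) := by
    rw [mul_comm (4 * Real.exp (2 * (1 / β - 1))) (1 + 1 / (1 - c))]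
    rw [mul_assoc, mul_assoc, ← Real.exp_add]; ring_nf
  rw [hre]
  rcases le_total y 2 with h2 | h2
  · have hle1 : 1 / (Real.cosh (y / β) - c) ≤ 1 / (1 - c) := by
      apply one_div_le_one_div_of_le h1c
      have := Real.one_le_cosh (y / β); linarith
    have hexp1 : (1:ℝ) ≤ Real.exp ((1 / β - 1) * (2 - y)) :=
      Real.one_le_exp (by nlinarith)
    have h1c2 : 0 < 1 / (1 - c) := by positivity
    calc 1 / (Real.cosh (y / β) - c) ≤ 1 / (1 - c) := hle1
      _ ≤ 4 * (1 + 1 / (1 - c)) * 1 := by nlinarith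
      _ ≤ 4 * (1 + 1 / (1 - c)) * Real.exp ((1 / β - 1) * (2 - y)) := by nlinarith
  · have hlow := den_exp_lower hβ0 hβ1 h2
    have hP4 : Real.exp (y / β) / 4 ≤ Real.cosh (y / β) - c := by linarith
    have hinv : 1 / (Real.cosh (y / β) - c) ≤ 4 * Real.exp (-(y / β)) := by
      rw [div_le_iff₀ hP]
      calc (1:ℝ) = Real.exp (-(y/β)) * Real.exp (y/β) := by
            rw [← Real.exp_add]; simp
        _ = 4 * Real.exp (-(y / β)) * (Real.exp (y / β) / 4) := by ring
        _ ≤ 4 * Real.exp (-(y / β)) * (Real.cosh (y / β) - c) := by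
            apply mul_le_mul_of_nonneg_left hP4 (by positivity)
    have hyb : Real.exp (-(y / β)) ≤ Real.exp ((1 / β - 1) * (2 - y)) := by
      apply Real.exp_le_exp.mpr
      have hb1 : 1 ≤ 1/β := by linarith
      have hexpand : (1 / β - 1) * (2 - y) - (-(y / β)) = 2 * (1/β) - 2 + y := by ring
      have h0 : 0 ≤ 2 * (1/β) - 2 + y := by linarith
      linarith
    have h1c' : (1:ℝ) ≤ 1 + 1 / (1 - c) := by
      have : 0 < 1 / (1 - c) := by positivity
      linarith
    calc 1 / (Real.cosh (y / β) - c) ≤ 4 * Real.exp (-(y / β)) := hinv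
      _ ≤ 4 * Real.exp ((1 / β - 1) * (2 - y)) := by
          have := mul_le_mul_of_nonneg_left hyb (by norm_num : (0:ℝ) ≤ 4); linarith
      _ ≤ 4 * (1 + 1 / (1 - c)) * Real.exp ((1 / β - 1) * (2 - y)) := by
          nlinarith [Real.exp_pos ((1 / β - 1) * (2 - y))]



lemma master_ptwise {r y : ℝ} (hr : 0 < r) (hy : 0 ≤ y) (k : ℕ) :
    Real.cosh y ^ k * Real.exp (-(r * (Real.cosh y - 1))) ≤
      Real.exp r * ((k+1).factorial : ℝ) * (1 / r) ^ (k+1) * 2 * Real.exp (-y) := by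
  have h1 : Real.cosh y ^ (k+1) * Real.exp (-(r * Real.cosh y)) ≤
      ((k+1).factorial : ℝ) * (1 / r) ^ (k+1) := by
    have hc : 0 ≤ r * Real.cosh y := by positivity
    have := pow_mul_exp_neg_le hc (k+1)
    have hrk : (0:ℝ) < r ^ (k+1) := by positivity
    rw [mul_pow] at this
    have h2 : Real.cosh y ^ (k+1) * Real.exp (-(r * Real.cosh y)) ≤
        ((k+1).factorial : ℝ) / r ^ (k+1) := by
      rw [le_div_iff₀ hrk]
      calc Real.cosh y ^ (k+1) * Real.exp (-(r * Real.cosh y)) * r ^ (k+1)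
          = r ^ (k+1) * Real.cosh y ^ (k+1) * Real.exp (-(r * Real.cosh y)) := by ring
        _ ≤ ((k+1).factorial : ℝ) := this
    calc Real.cosh y ^ (k+1) * Real.exp (-(r * Real.cosh y)) ≤
        ((k+1).factorial : ℝ) / r ^ (k+1) := h2
      _ = ((k+1).factorial : ℝ) * (1 / r) ^ (k+1) := by
          rw [one_div, inv_pow, div_eq_mul_inv]
  -- cosh y ^ k * exp(-(r(cosh y - 1))) = e^r * cosh^k e^{-r cosh} ≤ e^r * Ck / cosh y
  have hcosh1 : (1:ℝ) ≤ Real.cosh y := Real.one_le_cosh y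
  have hcp : (0:ℝ) < Real.cosh y := by linarith
  have hsplit : Real.exp (-(r * (Real.cosh y - 1))) =
      Real.exp r * Real.exp (-(r * Real.cosh y)) := by
    rw [← Real.exp_add]; ring_nf
  rw [hsplit]
  have hinv : 1 / Real.cosh y ≤ 2 * Real.exp (-y) := by
    rw [div_le_iff₀ hcp]
    have h2 : Real.exp (-y) * Real.exp y = 1 := by rw [← Real.exp_add]; simp
    nlinarith [mul_le_mul_of_nonneg_left (exp_le_two_cosh y) (le_of_lt (Real.exp_pos (-y))), h2]
  calc Real.cosh y ^ k * (Real.exp r * Real.exp (-(r * Real.cosh y)))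
      = Real.exp r * (Real.cosh y ^ (k+1) * Real.exp (-(r * Real.cosh y))) * (1 / Real.cosh y) := by
        field_simp; ring
    _ ≤ Real.exp r * (((k+1).factorial : ℝ) * (1 / r) ^ (k+1)) * (2 * Real.exp (-y)) := by
        apply mul_le_mul
        · exact mul_le_mul_of_nonneg_left h1 (le_of_lt (Real.exp_pos _))
        · exact hinv
        · positivity
        · positivity
    _ = Real.exp r * ((k+1).factorial : ℝ) * (1 / r) ^ (k+1) * 2 * Real.exp (-y) := by ring

lemma int_exp_neg : IntegrableOn (fun y => Real.exp (-y)) (Ioi (0:ℝ)) := by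
  have := exp_neg_integrableOn_Ioi 0 (one_pos (α := ℝ))
  simpa using this

lemma master_int (k : ℕ) {r : ℝ} (hr : 0 < r) :
    IntegrableOn (fun y => Real.cosh y ^ k * Real.exp (-(r * (Real.cosh y - 1)))) (Ioi (0:ℝ)) := by
  set C := Real.exp r * ((k+1).factorial : ℝ) * (1 / r) ^ (k+1) * 2 with hC
  have hC0 : 0 ≤ C := by positivity
  apply Integrable.mono (g := fun y => C * Real.exp (-y)) (int_exp_neg.const_mul C)
  · apply Continuous.aestronglyMeasurable
    continuity
  · rw [ae_restrict_iff' measurableSet_Ioi]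
    apply ae_of_all
    intro y hy
    have hy' : (0:ℝ) ≤ y := le_of_lt hy
    rw [Real.norm_eq_abs, Real.norm_eq_abs]
    rw [abs_of_nonneg (by positivity), abs_of_nonneg (by positivity)]
    exact master_ptwise hr hy' k

lemma int_exp_decay {a : ℝ} (ha : 0 < a) :
    IntegrableOn (fun y => Real.exp (-(a * y))) (Ioi (0:ℝ)) := by
  have := exp_neg_integrableOn_Ioi 0 ha
  simpa [neg_mul] using this

lemma integral_exp_decay {a : ℝ} (ha : 0 < a) :
    ∫ y in Ioi (0:ℝ), Real.exp (-(a * y)) = 1 / a := by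
  have hd : ∀ x ∈ Ioi (0:ℝ), HasDerivAt (fun y => -Real.exp (-(a * y)) / a)
      (Real.exp (-(a * x))) x := by
    intro x _
    have h1 : HasDerivAt (fun y : ℝ => -(a * y)) (-a) x := by
      exact (((hasDerivAt_id' x).const_mul a).neg).congr_deriv (by ring)
    have h2 := h1.exp
    have h3 := (h2.neg).div_const a
    refine h3.congr_deriv ?_
    field_simp
  have htend : Tendsto (fun y => -Real.exp (-(a * y)) / a) atTop (nhds 0) := by
    have h1 : Tendsto (fun y : ℝ => a * y) atTop atTop :=
      Tendsto.const_mul_atTop ha tendsto_id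
    have h2 : Tendsto (fun y : ℝ => Real.exp (-(a * y))) atTop (nhds 0) :=
      Real.tendsto_exp_neg_atTop_nhds_zero.comp h1
    have := (h2.neg).div_const a
    simpa using this
  have hcont : ContinuousWithinAt (fun y => -Real.exp (-(a * y)) / a) (Ici (0:ℝ)) 0 := by
    apply Continuous.continuousWithinAt
    continuity
  have := integral_Ioi_of_hasDerivAt_of_tendsto hcont hd (int_exp_decay ha) htend
  rw [this]
  simp only [mul_zero, neg_zero, Real.exp_zero, zero_sub, neg_neg]
  ring



section
variable {β w : ℝ}

lemma gg_abs_le (hw : Good β w) (y : ℝ) :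
    |gg β w y| ≤ 1 / (1 - Real.cos ((w - π) / β)) + 1 / (1 - Real.cos ((w + π) / β)) := by
  obtain ⟨h1, h2⟩ := hw
  have hP := den_pos h1 (y / β)
  have hQ := den_pos h2 (y / β)
  have hc1 : 0 < 1 - Real.cos ((w - π) / β) := by linarith
  have hc2 : 0 < 1 - Real.cos ((w + π) / β) := by linarith
  have hPc : 1 - Real.cos ((w - π) / β) ≤ Real.cosh (y / β) - Real.cos ((w - π) / β) := by
    have := Real.one_le_cosh (y / β); linarith
  have hQc : 1 - Real.cos ((w + π) / β) ≤ Real.cosh (y / β) - Real.cos ((w + π) / β) := by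
    have := Real.one_le_cosh (y / β); linarith
  have e1 : |Real.sin ((w - π) / β) / (Real.cosh (y / β) - Real.cos ((w - π) / β))| ≤
      1 / (1 - Real.cos ((w - π) / β)) := by
    rw [abs_div, abs_of_nonneg (le_of_lt hP)]
    apply div_le_div₀ (by positivity) (Real.abs_sin_le_one _) hc1 hPc |>.trans
    exact le_refl _
  have e2 : |Real.sin ((w + π) / β) / (Real.cosh (y / β) - Real.cos ((w + π) / β))| ≤
      1 / (1 - Real.cos ((w + π) / β)) := by
    rw [abs_div, abs_of_nonneg (le_of_lt hQ)]
    apply div_le_div₀ (by positivity) (Real.abs_sin_le_one _) hc2 hQc |>.trans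
    exact le_refl _
  calc |gg β w y| ≤ _ + _ := abs_sub _ _
    _ ≤ _ := add_le_add e1 e2

lemma cont_gg (hw : Good β w) : Continuous (fun y => gg β w y) := by
  unfold gg
  apply Continuous.sub
  · exact continuous_const.div (by fun_prop) (fun y => ne_of_gt (den_pos hw.1 _))
  · exact continuous_const.div (by fun_prop) (fun y => ne_of_gt (den_pos hw.2 _))

lemma cont_gg' (hw : Good β w) : Continuous (fun y => gg' β w y) := by
  unfold gg'
  apply Continuous.sub
  · apply Continuous.mul ?_ continuous_const
    apply Continuous.div (by fun_prop) (by fun_prop)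
    intro y
    exact pow_ne_zero 2 (ne_of_gt (den_pos hw.1 _))
  · apply Continuous.mul ?_ continuous_const
    apply Continuous.div (by fun_prop) (by fun_prop)
    intro y
    exact pow_ne_zero 2 (ne_of_gt (den_pos hw.2 _))

lemma gg_eq (hβ0 : 0 < β) (hw : Good β w) (y : ℝ) :
    2 * Real.sin (π / β) * (Real.cos (π / β) - Real.cos (w / β) * Real.cosh (y / β)) /
      ((Real.cosh (y / β) - Real.cos ((w - π) / β)) *
        (Real.cosh (y / β) - Real.cos ((w + π) / β))) = gg β w y := by
  have hP := den_pos hw.1 (y / β)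
  have hQ := den_pos hw.2 (y / β)
  rw [trig_id (ne_of_gt hβ0) w (Real.cosh (y / β))]
  rw [gg, div_sub_div _ _ (ne_of_gt hP) (ne_of_gt hQ)]
  congr 1
  ring

end

section
variable {β w : ℝ}

lemma exp_bound_ball {x z y : ℝ} (hz : 0 < z) (hx : x ∈ Metric.ball z (z/2)) :
    Real.exp (x * (1 - Real.cosh y)) ≤ Real.exp (-(z/2 * (Real.cosh y - 1))) := by
  have hxz : z/2 < x := by
    have := Metric.mem_ball.mp hx
    rw [Real.dist_eq, abs_lt] at this
    linarith [this.1]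
  apply Real.exp_le_exp.mpr
  have hc : 0 ≤ Real.cosh y - 1 := by have := Real.one_le_cosh y; linarith
  nlinarith

lemma integrable_F (hw : Good β w) {z : ℝ} (hz : 0 < z) (k : ℕ) :
    IntegrableOn (fun y => (1 - Real.cosh y) ^ k * Real.exp (z * (1 - Real.cosh y)) * gg β w y)
      (Ioi (0:ℝ)) := by
  set Kw := 1 / (1 - Real.cos ((w - π) / β)) + 1 / (1 - Real.cos ((w + π) / β)) with hKw
  have hKw0 : 0 ≤ Kw := by
    have h1 : 0 < 1 - Real.cos ((w - π) / β) := by have := hw.1; linarith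
    have h2 : 0 < 1 - Real.cos ((w + π) / β) := by have := hw.2; linarith
    positivity
  apply Integrable.mono ((master_int k hz).mul_const Kw)
  · exact (((by fun_prop : Continuous fun y : ℝ => (1 - Real.cosh y) ^ k *
      Real.exp (z * (1 - Real.cosh y)))).mul (cont_gg hw)).aestronglyMeasurable
  · apply ae_of_all
    intro y
    have h1 : |(1 - Real.cosh y) ^ k| = (Real.cosh y - 1) ^ k := by
      rw [abs_pow, abs_sub_comm, abs_of_nonneg (by have := Real.one_le_cosh y; linarith)]
    have h2 : (Real.cosh y - 1) ^ k ≤ Real.cosh y ^ k := by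
      apply pow_le_pow_left₀ (by have := Real.one_le_cosh y; linarith)
      linarith [Real.cosh_pos y]
    have h3 : Real.exp (z * (1 - Real.cosh y)) = Real.exp (-(z * (Real.cosh y - 1))) := by
      congr 1; ring
    rw [Real.norm_eq_abs, Real.norm_eq_abs, abs_mul, abs_mul, h1,
      abs_of_nonneg (le_of_lt (Real.exp_pos _)), h3]
    rw [abs_of_nonneg (by positivity : (0:ℝ) ≤ Real.cosh y ^ k *
      Real.exp (-(z * (Real.cosh y - 1))) * Kw)]
    have := gg_abs_le hw y
    calc (Real.cosh y - 1) ^ k * Real.exp (-(z * (Real.cosh y - 1))) * |gg β w y| ≤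
        Real.cosh y ^ k * Real.exp (-(z * (Real.cosh y - 1))) * Kw := by
          apply mul_le_mul
          · exact mul_le_mul_of_nonneg_right h2 (le_of_lt (Real.exp_pos _))
          · exact this
          · exact abs_nonneg _
          · positivity
      _ = _ := rfl

lemma iterated_eq (hβ0 : 0 < β) (hw : Good β w) :
    ∀ (k : ℕ) {z : ℝ}, 0 < z →
      iteratedDeriv k (fun ζ => Real.exp ζ * Efun β ζ w) z =
        ∫ y in Ioi (0:ℝ), (1 - Real.cosh y) ^ k * Real.exp (z * (1 - Real.cosh y)) * gg β w y := by
  intro k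
  induction k with
  | zero =>
    intro z hz
    rw [iteratedDeriv_zero]
    rw [Efun, ← integral_const_mul]
    apply setIntegral_congr_fun measurableSet_Ioi
    intro y _
    simp only [pow_zero, one_mul]
    rw [mul_div_assoc, gg_eq hβ0 hw y, ← mul_assoc, ← Real.exp_add]
    congr 2
    ring
  | succ k ih =>
    intro z hz
    rw [iteratedDeriv_succ]
    have hmem : Ioi (0:ℝ) ∈ 𝓝 z := isOpen_Ioi.mem_nhds hz
    have heq : iteratedDeriv k (fun ζ => Real.exp ζ * Efun β ζ w) =ᶠ[𝓝 z]
        (fun ζ => ∫ y in Ioi (0:ℝ), (1 - Real.cosh y) ^ k *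
          Real.exp (ζ * (1 - Real.cosh y)) * gg β w y) :=
      eventually_of_mem hmem (fun ζ hζ => ih hζ)
    rw [heq.deriv_eq]
    apply HasDerivAt.deriv
    have hε : 0 < z/2 := by linarith
    set Kw := 1 / (1 - Real.cos ((w - π) / β)) + 1 / (1 - Real.cos ((w + π) / β)) with hKw
    have hKw0 : 0 ≤ Kw := by
      have h1 : 0 < 1 - Real.cos ((w - π) / β) := by have := hw.1; linarith
      have h2 : 0 < 1 - Real.cos ((w + π) / β) := by have := hw.2; linarith
      positivity
    have H := hasDerivAt_integral_of_dominated_loc_of_deriv_le (μ := volume.restrict (Ioi 0))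
      (F := fun ζ y => (1 - Real.cosh y) ^ k * Real.exp (ζ * (1 - Real.cosh y)) * gg β w y)
      (F' := fun ζ y => (1 - Real.cosh y) ^ (k+1) * Real.exp (ζ * (1 - Real.cosh y)) * gg β w y)
      (x₀ := z)
      (bound := fun y => Real.cosh y ^ (k+1) * Real.exp (-(z/2 * (Real.cosh y - 1))) * Kw)
      (Metric.ball_mem_nhds z hε) ?_ ?_ ?_ ?_ ?_ ?_
    · exact H.2
    · apply Eventually.of_forall
      intro x
      exact (((by fun_prop : Continuous fun y : ℝ => (1 - Real.cosh y) ^ k *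
        Real.exp (x * (1 - Real.cosh y)))).mul (cont_gg hw)).aestronglyMeasurable
    · exact integrable_F hw hz k
    · exact (((by fun_prop : Continuous fun y : ℝ => (1 - Real.cosh y) ^ (k+1) *
        Real.exp (z * (1 - Real.cosh y)))).mul (cont_gg hw)).aestronglyMeasurable
    · apply ae_of_all
      intro y x hx
      have h1 : |(1 - Real.cosh y) ^ (k+1)| = (Real.cosh y - 1) ^ (k+1) := by
        rw [abs_pow, abs_sub_comm, abs_of_nonneg (by have := Real.one_le_cosh y; linarith)]
      have h2 : (Real.cosh y - 1) ^ (k+1) ≤ Real.cosh y ^ (k+1) := by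
        apply pow_le_pow_left₀ (by have := Real.one_le_cosh y; linarith)
        linarith [Real.cosh_pos y]
      rw [Real.norm_eq_abs, abs_mul, abs_mul, h1,
        abs_of_nonneg (le_of_lt (Real.exp_pos _))]
      have hgb := gg_abs_le hw y
      have hexp := exp_bound_ball (y := y) hz hx
      calc (Real.cosh y - 1) ^ (k+1) * Real.exp (x * (1 - Real.cosh y)) * |gg β w y| ≤
          Real.cosh y ^ (k+1) * Real.exp (-(z/2 * (Real.cosh y - 1))) * Kw := by
            apply mul_le_mul
            · exact mul_le_mul h2 hexp (le_of_lt (Real.exp_pos _)) (by positivity)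
            · exact hgb
            · exact abs_nonneg _
            · positivity
        _ = _ := rfl
    · exact (master_int (k+1) hε).mul_const Kw
    · apply ae_of_all
      intro y x _
      have h1 : HasDerivAt (fun ζ : ℝ => ζ * (1 - Real.cosh y)) (1 - Real.cosh y) x :=
        hasDerivAt_mul_const _
      have h2 := h1.exp
      have h3 := (h2.const_mul ((1 - Real.cosh y) ^ k)).mul_const (gg β w y)
      refine h3.congr_deriv ?_
      ring

end
section
variable {β : ℝ}

lemma hasDeriv_gg_w (hβ0 : 0 < β) {w : ℝ} (hw : Good β w) (y : ℝ) :
    HasDerivAt (fun w' => gg β w' y) (gg' β w y) w := by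
  have hP := den_pos hw.1 (y / β)
  have hQ := den_pos hw.2 (y / β)
  have ha : HasDerivAt (fun w' : ℝ => (w' - π) / β) (1 / β) w := by
    simpa using ((hasDerivAt_id w).sub_const π).div_const β
  have hb : HasDerivAt (fun w' : ℝ => (w' + π) / β) (1 / β) w := by
    simpa using ((hasDerivAt_id w).add_const π).div_const β
  have hsin_a : HasDerivAt (fun w' => Real.sin ((w' - π) / β))
      (Real.cos ((w - π) / β) * (1 / β)) w := (Real.hasDerivAt_sin _).comp w ha
  have hsin_b : HasDerivAt (fun w' => Real.sin ((w' + π) / β))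
      (Real.cos ((w + π) / β) * (1 / β)) w := (Real.hasDerivAt_sin _).comp w hb
  have hcos_a := (Real.hasDerivAt_cos ((w - π) / β)).comp w ha
  have hcos_b := (Real.hasDerivAt_cos ((w + π) / β)).comp w hb
  have hden_a : HasDerivAt (fun w' => Real.cosh (y / β) - Real.cos ((w' - π) / β))
      (Real.sin ((w - π) / β) * (1 / β)) w := by
    have := (hasDerivAt_const w (Real.cosh (y / β))).sub hcos_a
    refine this.congr_deriv ?_
    ring
  have hden_b : HasDerivAt (fun w' => Real.cosh (y / β) - Real.cos ((w' + π) / β))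
      (Real.sin ((w + π) / β) * (1 / β)) w := by
    have := (hasDerivAt_const w (Real.cosh (y / β))).sub hcos_b
    refine this.congr_deriv ?_
    ring
  have hdiv_a := hsin_a.div hden_a (ne_of_gt hP)
  have hdiv_b := hsin_b.div hden_b (ne_of_gt hQ)
  have key_a : Real.cos ((w - π) / β) * (1 / β) *
        (Real.cosh (y / β) - Real.cos ((w - π) / β)) -
        Real.sin ((w - π) / β) * (Real.sin ((w - π) / β) * (1 / β)) =
      (Real.cos ((w - π) / β) * Real.cosh (y / β) - 1) * (1 / β) := by
    linear_combination (-(1 / β)) * Real.sin_sq_add_cos_sq ((w - π) / β)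
  have key_b : Real.cos ((w + π) / β) * (1 / β) *
        (Real.cosh (y / β) - Real.cos ((w + π) / β)) -
        Real.sin ((w + π) / β) * (Real.sin ((w + π) / β) * (1 / β)) =
      (Real.cos ((w + π) / β) * Real.cosh (y / β) - 1) * (1 / β) := by
    linear_combination (-(1 / β)) * Real.sin_sq_add_cos_sq ((w + π) / β)
  rw [key_a] at hdiv_a
  rw [key_b] at hdiv_b
  have := hdiv_a.sub hdiv_b
  refine this.congr_deriv ?_
  unfold gg'
  ring

lemma good_isOpen : IsOpen {w : ℝ | Good β w} := by
  have h1 : IsOpen {w : ℝ | Real.cos ((w - π) / β) < 1} :=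
    isOpen_lt (by fun_prop) continuous_const
  have h2 : IsOpen {w : ℝ | Real.cos ((w + π) / β) < 1} :=
    isOpen_lt (by fun_prop) continuous_const
  exact h1.inter h2

lemma good_nbhd {v : ℝ} (hv : Good β v) :
    ∃ ε > 0, ∃ η > 0, ∀ w ∈ Metric.ball v ε, Good β w ∧
      η ≤ 1 - Real.cos ((w - π) / β) ∧ η ≤ 1 - Real.cos ((w + π) / β) := by
  obtain ⟨ε, hε, hball⟩ := Metric.isOpen_iff.mp (good_isOpen (β := β)) v hv
  have hhalf : 0 < ε / 2 := by linarith
  set f : ℝ → ℝ := fun w =>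
    min (1 - Real.cos ((w - π) / β)) (1 - Real.cos ((w + π) / β)) with hf
  have hfc : Continuous f := by
    apply Continuous.min <;> fun_prop
  obtain ⟨w₀, hw₀K, hmin⟩ := (isCompact_closedBall v (ε / 2)).exists_isMinOn
    ⟨v, Metric.mem_closedBall_self (le_of_lt hhalf)⟩ hfc.continuousOn
  have hw₀good : Good β w₀ := hball
    (Metric.closedBall_subset_ball (by linarith) hw₀K)
  have hη : 0 < f w₀ := by
    rw [hf]
    apply lt_min <;> [linarith [hw₀good.1]; linarith [hw₀good.2]]
  refine ⟨ε / 2, hhalf, f w₀, hη, fun w hw => ?_⟩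
  have hwK : w ∈ Metric.closedBall v (ε / 2) := Metric.ball_subset_closedBall hw
  have hfw : f w₀ ≤ f w := hmin hwK
  refine ⟨hball (Metric.ball_subset_ball (by linarith) hw), ?_, ?_⟩
  · exact le_trans hfw (min_le_left _ _)
  · exact le_trans hfw (min_le_right _ _)

lemma gg'_unif_bound (hβ0 : 0 < β) {w η : ℝ} (hη : 0 < η) (hw : Good β w)
    (h1 : η ≤ 1 - Real.cos ((w - π) / β)) (h2 : η ≤ 1 - Real.cos ((w + π) / β)) (y : ℝ) :
    |gg' β w y| ≤ 4 / (β * η) := by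
  have hb := gg'_bound hβ0 hw y
  have hc1 : 1 - Real.cos ((w - π) / β) ≤ Real.cosh (y / β) - Real.cos ((w - π) / β) := by
    have := Real.one_le_cosh (y / β); linarith
  have hc2 : 1 - Real.cos ((w + π) / β) ≤ Real.cosh (y / β) - Real.cos ((w + π) / β) := by
    have := Real.one_le_cosh (y / β); linarith
  have e1 : 1 / (Real.cosh (y / β) - Real.cos ((w - π) / β)) ≤ 1 / η :=
    one_div_le_one_div_of_le hη (le_trans h1 hc1)
  have e2 : 1 / (Real.cosh (y / β) - Real.cos ((w + π) / β)) ≤ 1 / η :=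
    one_div_le_one_div_of_le hη (le_trans h2 hc2)
  calc |gg' β w y| ≤ 2 / β * (1 / (Real.cosh (y / β) - Real.cos ((w - π) / β)) +
        1 / (Real.cosh (y / β) - Real.cos ((w + π) / β))) := hb
    _ ≤ 2 / β * (1 / η + 1 / η) := by
        apply mul_le_mul_of_nonneg_left (add_le_add e1 e2) (by positivity)
    _ = 4 / (β * η) := by field_simp; ring

lemma hasDeriv_Iw (hβ0 : 0 < β) {v z : ℝ} (hv : Good β v) (hz : 0 < z) (n : ℕ) :
    IntegrableOn (fun y => (1 - Real.cosh y) ^ n *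
        Real.exp (z * (1 - Real.cosh y)) * gg' β v y) (Ioi (0:ℝ)) ∧
      HasDerivAt (fun w => ∫ y in Ioi (0:ℝ), (1 - Real.cosh y) ^ n *
          Real.exp (z * (1 - Real.cosh y)) * gg β w y)
        (∫ y in Ioi (0:ℝ), (1 - Real.cosh y) ^ n *
          Real.exp (z * (1 - Real.cosh y)) * gg' β v y) v := by
  obtain ⟨ε, hε, η, hη, hball⟩ := good_nbhd hv
  have H := hasDerivAt_integral_of_dominated_loc_of_deriv_le (μ := volume.restrict (Ioi 0))
    (F := fun w y => (1 - Real.cosh y) ^ n * Real.exp (z * (1 - Real.cosh y)) * gg β w y)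
    (F' := fun w y => (1 - Real.cosh y) ^ n * Real.exp (z * (1 - Real.cosh y)) * gg' β w y)
    (x₀ := v)
    (bound := fun y => Real.cosh y ^ n * Real.exp (-(z * (Real.cosh y - 1))) * (4 / (β * η)))
    (Metric.ball_mem_nhds v hε) ?_ ?_ ?_ ?_ ?_ ?_
  · exact H
  · apply eventually_of_mem (Metric.ball_mem_nhds v hε)
    intro x hx
    exact (((by fun_prop : Continuous fun y : ℝ => (1 - Real.cosh y) ^ n *
      Real.exp (z * (1 - Real.cosh y)))).mul (cont_gg (hball x hx).1)).aestronglyMeasurable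
  · exact integrable_F hv hz n
  · exact (((by fun_prop : Continuous fun y : ℝ => (1 - Real.cosh y) ^ n *
      Real.exp (z * (1 - Real.cosh y)))).mul (cont_gg' hv)).aestronglyMeasurable
  · apply ae_of_all
    intro y x hx
    obtain ⟨hgx, hη1, hη2⟩ := hball x hx
    have h1 : |(1 - Real.cosh y) ^ n| = (Real.cosh y - 1) ^ n := by
      rw [abs_pow, abs_sub_comm, abs_of_nonneg (by have := Real.one_le_cosh y; linarith)]
    have h2 : (Real.cosh y - 1) ^ n ≤ Real.cosh y ^ n := by
      apply pow_le_pow_left₀ (by have := Real.one_le_cosh y; linarith)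
      linarith [Real.cosh_pos y]
    have h3 : Real.exp (z * (1 - Real.cosh y)) = Real.exp (-(z * (Real.cosh y - 1))) := by
      congr 1; ring
    rw [Real.norm_eq_abs, abs_mul, abs_mul, h1, abs_of_nonneg (le_of_lt (Real.exp_pos _)), h3]
    have hgb := gg'_unif_bound hβ0 hη hgx hη1 hη2 y
    apply mul_le_mul
    · exact mul_le_mul_of_nonneg_right h2 (le_of_lt (Real.exp_pos _))
    · exact hgb
    · exact abs_nonneg _
    · positivity
  · exact (master_int n hz).mul_const _
  · apply ae_of_all
    intro y x hx
    have := (hasDeriv_gg_w hβ0 (hball x hx).1 y).const_mul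
      ((1 - Real.cosh y) ^ n * Real.exp (z * (1 - Real.cosh y)))
    convert this using 2

end
section
variable {β : ℝ}

lemma gg'_decay_bound (hβ0 : 0 < β) (hβ1 : β < 1) {v : ℝ} (hv : Good β v) {y : ℝ} (hy : 0 ≤ y) :
    |gg' β v y| ≤ 2 / β * (4 * Real.exp (2 * (1 / β - 1)) * (1 + 1 / (1 - Real.cos ((v - π) / β)))
        + 4 * Real.exp (2 * (1 / β - 1)) * (1 + 1 / (1 - Real.cos ((v + π) / β)))) *
      Real.exp (-((1 / β - 1) * y)) := by
  have h1 := keyB (c := Real.cos ((v - π) / β)) hβ0 hβ1 hv.1 hy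
  have h2 := keyB (c := Real.cos ((v + π) / β)) hβ0 hβ1 hv.2 hy
  have hb := gg'_bound hβ0 hv y
  have hβ' : (0:ℝ) ≤ 2 / β := by positivity
  calc |gg' β v y| ≤ 2 / β * (1 / (Real.cosh (y / β) - Real.cos ((v - π) / β)) +
        1 / (Real.cosh (y / β) - Real.cos ((v + π) / β))) := hb
    _ ≤ 2 / β * ((4 * Real.exp (2 * (1 / β - 1)) * (1 + 1 / (1 - Real.cos ((v - π) / β)))
          * Real.exp (-((1 / β - 1) * y))) +
        (4 * Real.exp (2 * (1 / β - 1)) * (1 + 1 / (1 - Real.cos ((v + π) / β)))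
          * Real.exp (-((1 / β - 1) * y)))) :=
        mul_le_mul_of_nonneg_left (add_le_add h1 h2) hβ'
    _ = _ := by ring

lemma u_gg'_bound (hβ0 : 0 < β) (hβ1 : β < 1) {v : ℝ} (hv : Good β v) {y : ℝ} (hy : 0 ≤ y) :
    (Real.cosh y - 1) * |gg' β v y| ≤
      16 / β * Real.exp (2 * (1 / β - 1)) * Real.exp (-((1 / β - 1) * y)) := by
  have h1 := keyA (c := Real.cos ((v - π) / β)) hβ0 hβ1 hv.1 hy
  have h2 := keyA (c := Real.cos ((v + π) / β)) hβ0 hβ1 hv.2 hy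
  have hb := gg'_bound hβ0 hv y
  have hu : 0 ≤ Real.cosh y - 1 := by have := Real.one_le_cosh y; linarith
  calc (Real.cosh y - 1) * |gg' β v y| ≤
      (Real.cosh y - 1) * (2 / β * (1 / (Real.cosh (y / β) - Real.cos ((v - π) / β)) +
        1 / (Real.cosh (y / β) - Real.cos ((v + π) / β)))) :=
        mul_le_mul_of_nonneg_left hb hu
    _ = 2 / β * ((Real.cosh y - 1) * (1 / (Real.cosh (y / β) - Real.cos ((v - π) / β))) +
        (Real.cosh y - 1) * (1 / (Real.cosh (y / β) - Real.cos ((v + π) / β)))) := by ring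
    _ ≤ 2 / β * ((4 * Real.exp (2 * (1 / β - 1)) * Real.exp (-((1 / β - 1) * y))) +
        (4 * Real.exp (2 * (1 / β - 1)) * Real.exp (-((1 / β - 1) * y)))) :=
        mul_le_mul_of_nonneg_left (add_le_add h1 h2) (by positivity)
    _ = _ := by ring

lemma a_pos (hβ0 : 0 < β) (hβ1 : β < 1) : 0 < 1 / β - 1 := by
  have : 1 < 1 / β := (one_lt_div hβ0).mpr hβ1
  linarith

lemma gg'_integrable (hβ0 : 0 < β) (hβ1 : β < 1) {v : ℝ} (hv : Good β v) :
    IntegrableOn (fun y => gg' β v y) (Ioi (0:ℝ)) := by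
  set D := 2 / β * (4 * Real.exp (2 * (1 / β - 1)) * (1 + 1 / (1 - Real.cos ((v - π) / β)))
      + 4 * Real.exp (2 * (1 / β - 1)) * (1 + 1 / (1 - Real.cos ((v + π) / β)))) with hD
  have hD0 : 0 ≤ D := by
    have h1 : 0 < 1 - Real.cos ((v - π) / β) := by have := hv.1; linarith
    have h2 : 0 < 1 - Real.cos ((v + π) / β) := by have := hv.2; linarith
    positivity
  apply Integrable.mono ((int_exp_decay (a_pos hβ0 hβ1)).const_mul D)
  · exact (cont_gg' hv).aestronglyMeasurable
  · rw [ae_restrict_iff' measurableSet_Ioi]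
    apply ae_of_all
    intro y hy
    rw [Real.norm_eq_abs, Real.norm_eq_abs, abs_of_nonneg (by positivity : (0:ℝ) ≤ D *
      Real.exp (-((1 / β - 1) * y)))]
    exact gg'_decay_bound hβ0 hβ1 hv (le_of_lt hy)

lemma tendsto_term {c : ℝ} (hc : c < 1) :
    Tendsto (fun t => Real.sinh t / (Real.cosh t - c)) atTop (𝓝 1) := by
  have heq : ∀ t : ℝ, Real.sinh t / (Real.cosh t - c) =
      (1 - Real.exp (-(2 * t))) / (1 + Real.exp (-(2 * t)) - 2 * c * Real.exp (-t)) := by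
    intro t
    have hden := den_pos hc t
    have he1 : Real.exp (-t) * Real.exp t = 1 := by rw [← Real.exp_add]; simp
    have he2 : Real.exp (-(2 * t)) = Real.exp (-t) * Real.exp (-t) := by
      rw [← Real.exp_add]; ring_nf
    have hden2 : 1 + Real.exp (-(2 * t)) - 2 * c * Real.exp (-t) =
        2 * Real.exp (-t) * (Real.cosh t - c) := by
      rw [he2, Real.cosh_eq]
      field_simp
      nlinarith [he1]
    rw [hden2, Real.sinh_eq]
    rw [div_eq_div_iff (by positivity) (by positivity)]
    rw [he2]
    nlinarith [he1]
  have h2t : Tendsto (fun t : ℝ => Real.exp (-(2 * t))) atTop (𝓝 0) := by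
    have := Real.tendsto_exp_neg_atTop_nhds_zero.comp
      (Tendsto.const_mul_atTop two_pos (tendsto_id (α := ℝ)))
    simpa [Function.comp_def] using this
  have h1t : Tendsto (fun t : ℝ => Real.exp (-t)) atTop (𝓝 0) :=
    Real.tendsto_exp_neg_atTop_nhds_zero
  have hnum : Tendsto (fun t : ℝ => 1 - Real.exp (-(2 * t))) atTop (𝓝 1) := by
    have := (tendsto_const_nhds (x := (1:ℝ)) (f := atTop)).sub h2t
    simpa using this
  have hden : Tendsto (fun t : ℝ => 1 + Real.exp (-(2 * t)) - 2 * c * Real.exp (-t))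
      atTop (𝓝 1) := by
    have := ((tendsto_const_nhds (x := (1:ℝ)) (f := atTop)).add h2t).sub
      (h1t.const_mul (2 * c))
    simpa using this
  have := hnum.div hden one_ne_zero
  simp only [div_one] at this
  apply Tendsto.congr (fun t => (heq t).symm)
  exact this

lemma integral_gg'_zero (hβ0 : 0 < β) (hβ1 : β < 1) {v : ℝ} (hv : Good β v) :
    ∫ y in Ioi (0:ℝ), gg' β v y = 0 := by
  set c1 := Real.cos ((v - π) / β) with hc1
  set c2 := Real.cos ((v + π) / β) with hc2
  set Φ : ℝ → ℝ := fun y => Real.sinh (y / β) / (Real.cosh (y / β) - c2) -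
    Real.sinh (y / β) / (Real.cosh (y / β) - c1) with hΦ
  have hterm : ∀ (c : ℝ), c < 1 → ∀ y : ℝ,
      HasDerivAt (fun y' => Real.sinh (y' / β) / (Real.cosh (y' / β) - c))
        (-((c * Real.cosh (y / β) - 1) / (Real.cosh (y / β) - c) ^ 2 * (1 / β))) y := by
    intro c hc y
    have hyd : HasDerivAt (fun y' : ℝ => y' / β) (1 / β) y := by
      simpa using (hasDerivAt_id y).div_const β
    have hs : HasDerivAt (fun y' => Real.sinh (y' / β)) (Real.cosh (y / β) * (1 / β)) y :=
      (Real.hasDerivAt_sinh _).comp y hyd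
    have hd : HasDerivAt (fun y' => Real.cosh (y' / β) - c) (Real.sinh (y / β) * (1 / β)) y :=
      ((Real.hasDerivAt_cosh _).comp y hyd).sub_const c
    have hq := hs.div hd (ne_of_gt (den_pos hc (y / β)))
    have key : Real.cosh (y / β) * (1 / β) * (Real.cosh (y / β) - c) -
        Real.sinh (y / β) * (Real.sinh (y / β) * (1 / β)) =
        -((c * Real.cosh (y / β) - 1) * (1 / β)) := by
      linear_combination (1 / β) * Real.cosh_sq_sub_sinh_sq (y / β)
    rw [key] at hq
    refine hq.congr_deriv ?_
    ring
  have hderiv : ∀ y ∈ Ioi (0:ℝ), HasDerivAt Φ (gg' β v y) y := by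
    intro y _
    have h1 := hterm c1 hv.1 y
    have h2 := hterm c2 hv.2 y
    have := h2.sub h1
    refine this.congr_deriv ?_
    unfold gg'
    rw [← hc1, ← hc2]
    ring
  have hcont : ContinuousWithinAt Φ (Ici (0:ℝ)) 0 := by
    apply Continuous.continuousWithinAt
    apply Continuous.sub
    · exact (by fun_prop : Continuous fun y : ℝ => Real.sinh (y / β)).div (by fun_prop)
        (fun y => ne_of_gt (den_pos hv.2 _))
    · exact (by fun_prop : Continuous fun y : ℝ => Real.sinh (y / β)).div (by fun_prop)
        (fun y => ne_of_gt (den_pos hv.1 _))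
  have hdivβ : Tendsto (fun y : ℝ => y / β) atTop atTop :=
    tendsto_id.atTop_div_const hβ0
  have htend : Tendsto Φ atTop (𝓝 0) := by
    have h2 := (tendsto_term hv.2).comp hdivβ
    have h1 := (tendsto_term hv.1).comp hdivβ
    have := h2.sub h1
    simpa [Function.comp_def] using this
  have := integral_Ioi_of_hasDerivAt_of_tendsto hcont hderiv
    (gg'_integrable hβ0 hβ1 hv) htend
  rw [this, hΦ]
  simp [Real.sinh_zero]

end
end EfunAux

/-- For each `n ≥ 0` there is `C_n` with
`|∂/∂v ( z^{n−1} (∂ⁿ/∂zⁿ)(e^z E(z,v)) )| ≤ C_n` for all `z > 0` and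
`v ≢ ±π (mod 2βπ)`. -/
theorem Efun_ez_angle_derivative_bounds (β : ℝ) (hβ0 : 0 < β) (hβ1 : β < 1) (n : ℕ) :
    ∃ C > 0, ∀ z : ℝ, 0 < z → ∀ v : ℝ,
      (∀ k : ℤ, v + 2 * (k : ℝ) * β * π ≠ π ∧ v + 2 * (k : ℝ) * β * π ≠ -π) →
      |deriv (fun w => z ^ ((n : ℝ) - 1) *
        iteratedDeriv n (fun ζ => Real.exp ζ * Efun β ζ w) z) v| ≤ C := by
  have ha : 0 < 1 / β - 1 := EfunAux.a_pos hβ0 hβ1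
  set a : ℝ := 1 / β - 1 with hadef
  set K : ℝ := 16 / β * Real.exp (2 * a) * (n.factorial : ℝ) with hK
  have hK0 : 0 < K := by positivity
  refine ⟨K * (1 / a) + 1, by positivity, ?_⟩
  intro z hz v hyp
  -- v is a good angle
  have hv : EfunAux.Good β v := by
    constructor
    · rcases lt_or_eq_of_le (Real.cos_le_one ((v - π) / β)) with h | h
      · exact h
      · exfalso
        obtain ⟨k, hk⟩ := (Real.cos_eq_one_iff _).mp h
        have hb : (v - π) = (k : ℝ) * (2 * π) * β := by
          field_simp at hk ⊢
          linarith [hk]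
        exact (hyp (-k)).1 (by push_cast; linarith [hb])
    · rcases lt_or_eq_of_le (Real.cos_le_one ((v + π) / β)) with h | h
      · exact h
      · exfalso
        obtain ⟨k, hk⟩ := (Real.cos_eq_one_iff _).mp h
        have hb : (v + π) = (k : ℝ) * (2 * π) * β := by
          field_simp at hk ⊢
          linarith [hk]
        exact (hyp (-k)).2 (by push_cast; linarith [hb])
  obtain ⟨ε, hε, η, hη, hball⟩ := EfunAux.good_nbhd hv
  -- replace the function by the parametric integral near v
  have heq : (fun w => z ^ ((n : ℝ) - 1) *
        iteratedDeriv n (fun ζ => Real.exp ζ * Efun β ζ w) z) =ᶠ[𝓝 v]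
      (fun w => z ^ ((n : ℝ) - 1) * ∫ y in Ioi (0:ℝ),
        (1 - Real.cosh y) ^ n * Real.exp (z * (1 - Real.cosh y)) * EfunAux.gg β w y) := by
    apply eventually_of_mem (Metric.ball_mem_nhds v hε)
    intro w hw
    dsimp only
    rw [EfunAux.iterated_eq hβ0 (hball w hw).1 n hz]
  rw [heq.deriv_eq]
  obtain ⟨hint', hder⟩ := EfunAux.hasDeriv_Iw hβ0 hv hz n
  have hder2 := hder.const_mul (z ^ ((n : ℝ) - 1))
  rw [hder2.deriv]
  set I' : ℝ := ∫ y in Ioi (0:ℝ), (1 - Real.cosh y) ^ n *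
    Real.exp (z * (1 - Real.cosh y)) * EfunAux.gg' β v y with hI'
  have hKa : K * (1/a) ≤ K * (1/a) + 1 := by linarith
  -- main estimate
  rcases n with _ | m
  · -- n = 0
    have hexp0 : (((0:ℕ) : ℝ) - 1) = (-1 : ℝ) := by norm_num
    rw [hexp0, Real.rpow_neg_one]
    -- I' = ∫ (e^{z(1-cosh)} - 1) gg'  since ∫ gg' = 0
    have hint'' : IntegrableOn (fun y => Real.exp (z * (1 - Real.cosh y)) * EfunAux.gg' β v y)
        (Ioi (0:ℝ)) := by
      have := hint'
      simpa using this
    have hgint := EfunAux.gg'_integrable hβ0 hβ1 hv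
    have hI'eq : I' = ∫ y in Ioi (0:ℝ),
        (Real.exp (z * (1 - Real.cosh y)) - 1) * EfunAux.gg' β v y := by
      rw [hI']
      have h0 := EfunAux.integral_gg'_zero hβ0 hβ1 hv
      have hsub : ∫ y in Ioi (0:ℝ),
          (Real.exp (z * (1 - Real.cosh y)) - 1) * EfunAux.gg' β v y =
          (∫ y in Ioi (0:ℝ), Real.exp (z * (1 - Real.cosh y)) * EfunAux.gg' β v y) -
          ∫ y in Ioi (0:ℝ), EfunAux.gg' β v y := by
        rw [← integral_sub hint'' hgint]
        apply setIntegral_congr_fun measurableSet_Ioi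
        intro y _
        ring
      rw [hsub, h0, sub_zero]
      apply setIntegral_congr_fun measurableSet_Ioi
      intro y _
      simp
    rw [hI'eq]
    have hbnd : ‖∫ y in Ioi (0:ℝ),
        (Real.exp (z * (1 - Real.cosh y)) - 1) * EfunAux.gg' β v y‖ ≤
        ∫ y in Ioi (0:ℝ), z * (16 / β * Real.exp (2 * a) * Real.exp (-(a * y))) := by
      apply norm_integral_le_of_norm_le
      · apply Integrable.const_mul
        exact (EfunAux.int_exp_decay ha).const_mul _
      · rw [ae_restrict_iff' measurableSet_Ioi]
        apply ae_of_all
        intro y hy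
        have hy' : (0:ℝ) ≤ y := le_of_lt hy
        have hu : 0 ≤ Real.cosh y - 1 := by have := Real.one_le_cosh y; linarith
        have habs : |Real.exp (z * (1 - Real.cosh y)) - 1| ≤ z * (Real.cosh y - 1) := by
          have hneg : z * (1 - Real.cosh y) ≤ 0 := by nlinarith
          have hle1 : Real.exp (z * (1 - Real.cosh y)) ≤ 1 :=
            le_trans (Real.exp_le_exp.mpr hneg) (le_of_eq Real.exp_zero)
          have hlow := Real.add_one_le_exp (z * (1 - Real.cosh y))
          rw [abs_of_nonpos (by linarith)]
          nlinarith
        have hugg := EfunAux.u_gg'_bound hβ0 hβ1 hv hy'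
        rw [Real.norm_eq_abs, abs_mul]
        calc |Real.exp (z * (1 - Real.cosh y)) - 1| * |EfunAux.gg' β v y| ≤
            (z * (Real.cosh y - 1)) * |EfunAux.gg' β v y| :=
              mul_le_mul_of_nonneg_right habs (abs_nonneg _)
          _ = z * ((Real.cosh y - 1) * |EfunAux.gg' β v y|) := by ring
          _ ≤ z * (16 / β * Real.exp (2 * a) * Real.exp (-(a * y))) := by
              apply mul_le_mul_of_nonneg_left ?_ (le_of_lt hz)
              simpa [hadef] using hugg
    have hintval : ∫ y in Ioi (0:ℝ),
        z * (16 / β * Real.exp (2 * a) * Real.exp (-(a * y))) =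
        z * (16 / β * Real.exp (2 * a)) * (1 / a) := by
      rw [integral_const_mul]
      rw [integral_const_mul]
      rw [EfunAux.integral_exp_decay ha]
      ring
    rw [abs_mul, abs_of_nonneg (by positivity : (0:ℝ) ≤ z⁻¹)]
    have : |∫ y in Ioi (0:ℝ),
        (Real.exp (z * (1 - Real.cosh y)) - 1) * EfunAux.gg' β v y| ≤
        z * (16 / β * Real.exp (2 * a)) * (1 / a) := by
      rw [← hintval, ← Real.norm_eq_abs]
      exact hbnd
    calc z⁻¹ * |∫ y in Ioi (0:ℝ),
          (Real.exp (z * (1 - Real.cosh y)) - 1) * EfunAux.gg' β v y| ≤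
          z⁻¹ * (z * (16 / β * Real.exp (2 * a)) * (1 / a)) :=
            mul_le_mul_of_nonneg_left this (by positivity)
      _ = 16 / β * Real.exp (2 * a) * (1 / a) := by field_simp
      _ ≤ K * (1 / a) + 1 := by
          rw [hK]
          simp only [Nat.factorial_zero, Nat.cast_one, mul_one]
          linarith
  · -- n = m + 1
    have hexp0 : (((m + 1 : ℕ) : ℝ) - 1) = ((m : ℕ) : ℝ) := by push_cast; ring
    rw [hexp0, Real.rpow_natCast]
    have hbnd : ‖z ^ m * I'‖ ≤
        ∫ y in Ioi (0:ℝ), (m.factorial : ℝ) * (16 / β * Real.exp (2 * a) *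
          Real.exp (-(a * y))) := by
      rw [hI', ← integral_const_mul]
      apply norm_integral_le_of_norm_le
      · apply Integrable.const_mul
        exact (EfunAux.int_exp_decay ha).const_mul _
      · rw [ae_restrict_iff' measurableSet_Ioi]
        apply ae_of_all
        intro y hy
        have hy' : (0:ℝ) ≤ y := le_of_lt hy
        have hu : 0 ≤ Real.cosh y - 1 := by have := Real.one_le_cosh y; linarith
        have h1 : |(1 - Real.cosh y) ^ (m+1)| = (Real.cosh y - 1) ^ (m+1) := by
          rw [abs_pow, abs_sub_comm, abs_of_nonneg hu]
        have hzu := EfunAux.pow_mul_exp_neg_le (by positivity : (0:ℝ) ≤ z * (Real.cosh y - 1)) m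
        have hugg := EfunAux.u_gg'_bound hβ0 hβ1 hv hy'
        have hugg' : (Real.cosh y - 1) * |EfunAux.gg' β v y| ≤
            16 / β * Real.exp (2 * a) * Real.exp (-(a * y)) := by
          simpa [hadef] using hugg
        rw [Real.norm_eq_abs, abs_mul, abs_mul, abs_mul, h1,
          abs_of_nonneg (le_of_lt (Real.exp_pos _)),
          abs_of_nonneg (by positivity : (0:ℝ) ≤ z ^ m)]
        have hrw : z ^ m * ((Real.cosh y - 1) ^ (m+1) *
            Real.exp (z * (1 - Real.cosh y)) * |EfunAux.gg' β v y|) =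
            ((z * (Real.cosh y - 1)) ^ m * Real.exp (-(z * (Real.cosh y - 1)))) *
            ((Real.cosh y - 1) * |EfunAux.gg' β v y|) := by
          rw [mul_pow]
          have : Real.exp (z * (1 - Real.cosh y)) =
              Real.exp (-(z * (Real.cosh y - 1))) := by congr 1; ring
          rw [this]
          ring
        rw [hrw]
        calc ((z * (Real.cosh y - 1)) ^ m * Real.exp (-(z * (Real.cosh y - 1)))) *
            ((Real.cosh y - 1) * |EfunAux.gg' β v y|) ≤
            (m.factorial : ℝ) * ((Real.cosh y - 1) * |EfunAux.gg' β v y|) := by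
              apply mul_le_mul_of_nonneg_right hzu
              positivity
          _ ≤ (m.factorial : ℝ) * (16 / β * Real.exp (2 * a) * Real.exp (-(a * y))) := by
              apply mul_le_mul_of_nonneg_left hugg'
              positivity
    have hintval : ∫ y in Ioi (0:ℝ), (m.factorial : ℝ) * (16 / β * Real.exp (2 * a) *
        Real.exp (-(a * y))) = (m.factorial : ℝ) * (16 / β * Real.exp (2 * a)) * (1 / a) := by
      rw [integral_const_mul, integral_const_mul, EfunAux.integral_exp_decay ha]
      ring
    have hfac : (m.factorial : ℝ) ≤ ((m+1).factorial : ℝ) := by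
      exact_mod_cast Nat.factorial_le (Nat.le_succ m)
    calc |z ^ m * I'| ≤ (m.factorial : ℝ) * (16 / β * Real.exp (2 * a)) * (1 / a) := by
          rw [← hintval, ← Real.norm_eq_abs]
          exact hbnd
      _ ≤ K * (1 / a) := by
          rw [hK]
          have h16 : (0:ℝ) < 16 / β * Real.exp (2 * a) := by positivity
          have : (m.factorial : ℝ) * (16 / β * Real.exp (2 * a)) ≤
              16 / β * Real.exp (2 * a) * ((m+1).factorial : ℝ) := by nlinarith
          apply mul_le_mul_of_nonneg_right this (by positivity)
      _ ≤ K * (1 / a) + 1 := by linarith
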